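/- Let D ∈ ℝ^{2×2} be symmetric with det D < 0 (so D has one positive and one negative eigenvalue), let |D| := V|Λ|Vᵀ for a spectral decomposition D = VΛVᵀ, and let |D| = L·Lᵀ with L invertible. Then the eigenvalues of the symmetric matrix L⁻¹·D·L⁻ᵀ − I are exactly −2 and 0. Similarly, if d < 0 is a scalar and ℓ = √(−d), then ℓ⁻¹·d·ℓ⁻¹ − 1 = −2. -/

import Mathlib

open Matrix

theorem stmt_7 (D V L : Matrix (Fin 2) (Fin 2) ℝ) (d : Fin 2 → ℝ)
    (hDsym : Dᵀ = D) (hdet : D.det < 0)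
    (hV : Vᵀ * V = 1) (hspec : D = V * Matrix.diagonal d * Vᵀ)
    (hL : IsUnit L.det)
    (hChol : V * Matrix.diagonal (fun i => |d i|) * Vᵀ = L * Lᵀ) :
    spectrum ℝ (L⁻¹ * D * (Lᵀ)⁻¹ - 1) = {-2, 0} ∧
      ∀ e : ℝ, e < 0 →
        (Real.sqrt (-e))⁻¹ * e * (Real.sqrt (-e))⁻¹ - 1 = -2 := by
  have hVu : V * Vᵀ = 1 := mul_eq_one_comm.mp hV
  have hVinv : V⁻¹ = Vᵀ := Matrix.inv_eq_right_inv hVu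
  have hVTinv : (Vᵀ)⁻¹ = V := Matrix.inv_eq_right_inv hV
  have hdV : IsUnit V.det := Matrix.isUnit_det_of_right_inverse hVu
  -- d 0 * d 1 < 0
  have hdd : d 0 * d 1 < 0 := by
    have h1 : Vᵀ.det * V.det = 1 := by
      rw [← Matrix.det_mul, hV, Matrix.det_one]
    rw [Matrix.det_transpose] at h1
    have h2 : D.det = V.det * (d 0 * d 1) * V.det := by
      rw [hspec, Matrix.det_mul, Matrix.det_mul, Matrix.det_diagonal,
        Fin.prod_univ_two, Matrix.det_transpose]
    nlinarith [hdet]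
  have hd0 : d 0 ≠ 0 := fun h => by simp [h] at hdd
  have hd1 : d 1 ≠ 0 := fun h => by simp [h] at hdd
  have hdL : IsUnit Lᵀ.det := by rwa [Matrix.det_transpose]
  set f : Fin 2 → ℝ := fun i => d i * |d i|⁻¹ - 1 with hf
  -- key conjugation identity
  have key : L * (L⁻¹ * D * (Lᵀ)⁻¹ - 1) * L⁻¹ = V * Matrix.diagonal f * Vᵀ := by
    have h1 : L * (L⁻¹ * D * (Lᵀ)⁻¹ - 1) * L⁻¹
        = D * ((Lᵀ)⁻¹ * L⁻¹) - 1 := by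
      rw [Matrix.mul_sub, Matrix.sub_mul, Matrix.mul_one,
        Matrix.mul_nonsing_inv L hL]
      congr 1
      rw [show L * (L⁻¹ * D * (Lᵀ)⁻¹) * L⁻¹ = L * L⁻¹ * (D * ((Lᵀ)⁻¹ * L⁻¹)) by
        simp only [Matrix.mul_assoc]]
      rw [Matrix.mul_nonsing_inv L hL, Matrix.one_mul]
    have habs : ∀ i : Fin 2, |d i| ≠ 0 := by
      intro i; fin_cases i <;> simp [abs_ne_zero, hd0, hd1]
    have hdiaginv : (Matrix.diagonal fun i => |d i|)⁻¹
        = Matrix.diagonal fun i => |d i|⁻¹ := by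
      apply Matrix.inv_eq_right_inv
      have he : (fun i => |d i| * |d i|⁻¹) = fun _ => (1:ℝ) :=
        funext fun i => mul_inv_cancel₀ (habs i)
      rw [Matrix.diagonal_mul_diagonal, he, Matrix.diagonal_one]
    have h2 : (Lᵀ)⁻¹ * L⁻¹ = V * (Matrix.diagonal fun i => |d i|)⁻¹ * Vᵀ := by
      rw [← Matrix.mul_inv_rev, ← hChol, Matrix.mul_inv_rev, Matrix.mul_inv_rev,
        hVinv, hVTinv, Matrix.mul_assoc]
    rw [h1, h2, hdiaginv, hspec]
    have h3 : V * Matrix.diagonal d * Vᵀ * (V * Matrix.diagonal (fun i => |d i|⁻¹) * Vᵀ)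
        = V * (Matrix.diagonal d * Matrix.diagonal fun i => |d i|⁻¹) * Vᵀ := by
      rw [show V * Matrix.diagonal d * Vᵀ * (V * Matrix.diagonal (fun i => |d i|⁻¹) * Vᵀ)
          = V * Matrix.diagonal d * (Vᵀ * V) * Matrix.diagonal (fun i => |d i|⁻¹) * Vᵀ by
        simp only [Matrix.mul_assoc]]
      rw [hV, Matrix.mul_one]
      simp only [Matrix.mul_assoc]
    rw [h3, Matrix.diagonal_mul_diagonal]
    have h4 : (1 : Matrix (Fin 2) (Fin 2) ℝ) = V * Matrix.diagonal (fun _ => (1:ℝ)) * Vᵀ := by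
      simp [hVu]
    nth_rewrite 1 [h4]
    rw [← Matrix.sub_mul, ← Matrix.mul_sub, Matrix.diagonal_sub]
  constructor
  · -- spectrum computation
    have hLunit : IsUnit L := (Matrix.isUnit_iff_isUnit_det L).mpr hL
    have hVunit : IsUnit V := (Matrix.isUnit_iff_isUnit_det V).mpr hdV
    obtain ⟨uL, huL⟩ := hLunit
    obtain ⟨uV, huV⟩ := hVunit
    have huLinv : (↑uL⁻¹ : Matrix (Fin 2) (Fin 2) ℝ) = L⁻¹ := by
      rw [Matrix.coe_units_inv, huL]
    have huVinv : (↑uV⁻¹ : Matrix (Fin 2) (Fin 2) ℝ) = Vᵀ := by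
      rw [Matrix.coe_units_inv, huV, hVinv]
    set a : Matrix (Fin 2) (Fin 2) ℝ := L⁻¹ * D * (Lᵀ)⁻¹ - 1 with ha
    have s1 : spectrum ℝ a = spectrum ℝ (V * Matrix.diagonal f * Vᵀ) :=
      calc spectrum ℝ a = spectrum ℝ (↑uL * a * ↑uL⁻¹) :=
            (spectrum.units_conjugate).symm
        _ = spectrum ℝ (V * Matrix.diagonal f * Vᵀ) := by rw [huL, huLinv, key]
    have s2 : spectrum ℝ (V * Matrix.diagonal f * Vᵀ)
        = spectrum ℝ (Matrix.diagonal f) := by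
      rw [← huVinv, ← huV]; exact spectrum.units_conjugate
    rw [s1, s2, spectrum_diagonal]
    have hrange : Set.range f = {f 0, f 1} := by
      ext x
      constructor
      · rintro ⟨i, rfl⟩; fin_cases i <;> simp
      · rintro (rfl | rfl) <;> [exact ⟨0, rfl⟩; exact ⟨1, rfl⟩]
    rw [hrange]
    rcases lt_or_gt_of_ne hd0 with h0 | h0
    · have h1 : 0 < d 1 := by nlinarith
      have : f 0 = -2 := by
        simp only [hf]
        rw [abs_of_neg h0]
        field_simp
        ring
      have h2 : f 1 = 0 := by
        simp only [hf]
        rw [abs_of_pos h1]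
        field_simp
        norm_num
      rw [this, h2]
    · have h1 : d 1 < 0 := by nlinarith
      have : f 0 = 0 := by
        simp only [hf]
        rw [abs_of_pos h0]
        field_simp
        norm_num
      have h2 : f 1 = -2 := by
        simp only [hf]
        rw [abs_of_neg h1]
        field_simp
        ring
      rw [this, h2, Set.pair_comm]
  · intro e he
    have h1 : Real.sqrt (-e) * Real.sqrt (-e) = -e := Real.mul_self_sqrt (by linarith)
    have h2 : Real.sqrt (-e) > 0 := Real.sqrt_pos.mpr (by linarith)
    field_simp
    nlinarith
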